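/- Let p ≥ 2 be an even integer, let H = {h : [n] → [m]} be a 4p-wise independent hash family, and let D be a 4p-wise independent distribution over {−1,1}^n. Then for h uniform in H, x ∼ D, and any v ∈ ℝ^n: E[‖v D(x) A(h)ᵀ‖_4^{4p}] ≤ O(p)^{4p}·(‖v‖_2^4/m)^p + O(p)^{4p}·‖v‖_4^{4p}. -/

import Mathlib

open Finset

/-- The map sending a boolean to the corresponding sign `±1`. -/
noncomputable def pm (b : Bool) : ℝ := if b then 1 else -1


lemma pm_sq (b : Bool) : pm b * pm b = 1 := by
  unfold pm; cases b <;> norm_num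

lemma pm_pow (b : Bool) (k : ℕ) : pm b ^ k = if Even k then 1 else pm b := by
  induction k with
  | zero => simp
  | succ k ih =>
    rw [pow_succ, ih]
    by_cases h : Even k
    · simp [h, Nat.even_add_one]
    · simp [h, Nat.even_add_one, pm_sq]

/-- sum of k-th powers is at most k-th power of sum, for nonneg terms -/
lemma sum_pow_le {ι : Type*} (s : Finset ι) (w : ι → ℝ) (hw : ∀ i ∈ s, 0 ≤ w i) (k : ℕ)
    (hk : 1 ≤ k) : ∑ i ∈ s, w i ^ k ≤ (∑ i ∈ s, w i) ^ k := by
  induction k with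
  | zero => omega
  | succ k ih =>
    rcases Nat.eq_or_lt_of_le hk with h1 | h2
    · simp [← h1]
    · have hk' : 1 ≤ k := by omega
      calc ∑ i ∈ s, w i ^ (k+1) ≤ ∑ i ∈ s, w i ^ k * (∑ j ∈ s, w j) := by
            apply sum_le_sum; intro i hi
            rw [pow_succ]
            exact mul_le_mul_of_nonneg_left (single_le_sum hw hi) (pow_nonneg (hw i hi) k)
        _ = (∑ i ∈ s, w i ^ k) * (∑ j ∈ s, w j) := by rw [← sum_mul]
        _ ≤ (∑ i ∈ s, w i) ^ k * (∑ j ∈ s, w j) := by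
            apply mul_le_mul_of_nonneg_right (ih hk') (sum_nonneg hw)
        _ = (∑ i ∈ s, w i) ^ (k+1) := by rw [pow_succ]

/-- (Σ w^f)² ≤ (Σ w²)^f for f ≥ 2, w ≥ 0 -/
lemma sq_sum_pow_le {ι : Type*} (s : Finset ι) (w : ι → ℝ) (hw : ∀ i ∈ s, 0 ≤ w i) (f : ℕ)
    (hf : 2 ≤ f) : (∑ i ∈ s, w i ^ f) ^ 2 ≤ (∑ i ∈ s, w i ^ 2) ^ f := by
  have base : ∀ k : ℕ, 1 ≤ k → ∑ i ∈ s, w i ^ (2 * k) ≤ (∑ i ∈ s, w i ^ 2) ^ k := by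
    intro k hk
    calc ∑ i ∈ s, w i ^ (2 * k) = ∑ i ∈ s, (w i ^ 2) ^ k := by
          apply sum_congr rfl; intro i _; rw [← pow_mul]
      _ ≤ (∑ i ∈ s, w i ^ 2) ^ k := sum_pow_le s _ (fun i hi => pow_nonneg (hw i hi) 2) k hk
  rcases Nat.even_or_odd f with ⟨k, hk⟩ | ⟨k, hk⟩
  · have hk1 : 1 ≤ k := by omega
    have h1 : ∑ i ∈ s, w i ^ f ≤ (∑ i ∈ s, w i ^ 2) ^ k := by
      have := base k hk1; rwa [show 2 * k = f by omega] at this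
    have h0 : (0:ℝ) ≤ ∑ i ∈ s, w i ^ f := sum_nonneg fun i hi => pow_nonneg (hw i hi) f
    calc (∑ i ∈ s, w i ^ f) ^ 2 ≤ ((∑ i ∈ s, w i ^ 2) ^ k) ^ 2 := by
          apply pow_le_pow_left₀ h0 h1
      _ = (∑ i ∈ s, w i ^ 2) ^ f := by rw [← pow_mul]; congr 1; omega
  · -- f = 2k+1, k ≥ 1
    have hk1 : 1 ≤ k := by omega
    have cs : (∑ i ∈ s, w i ^ k * w i ^ (k+1)) ^ 2 ≤
        (∑ i ∈ s, (w i ^ k) ^ 2) * ∑ i ∈ s, (w i ^ (k+1)) ^ 2 :=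
      sum_mul_sq_le_sq_mul_sq s _ _
    have e1 : ∀ i ∈ s, w i ^ k * w i ^ (k+1) = w i ^ f := by
      intro i _; rw [← pow_add]; congr 1; omega
    have e2 : ∀ i ∈ s, (w i ^ k) ^ 2 = w i ^ (2 * k) := by intro i _; rw [← pow_mul]; ring_nf
    have e3 : ∀ i ∈ s, (w i ^ (k+1)) ^ 2 = w i ^ (2 * (k+1)) := by
      intro i _; rw [← pow_mul]; ring_nf
    rw [sum_congr rfl e1, sum_congr rfl e2, sum_congr rfl e3] at cs
    calc (∑ i ∈ s, w i ^ f) ^ 2 ≤ (∑ i ∈ s, w i ^ (2*k)) * ∑ i ∈ s, w i ^ (2*(k+1)) := cs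
      _ ≤ (∑ i ∈ s, w i ^ 2) ^ k * (∑ i ∈ s, w i ^ 2) ^ (k+1) := by
          apply mul_le_mul (base k hk1) (base (k+1) (by omega))
            (sum_nonneg fun i hi => pow_nonneg (hw i hi) _)
            (pow_nonneg (sum_nonneg fun i hi => pow_nonneg (hw i hi) 2) _)
      _ = (∑ i ∈ s, w i ^ 2) ^ f := by rw [← pow_add]; congr 1; omega

-- fibers of Prod.fst have card 4
lemma card_fst_fiber {p : ℕ} (k : Fin p) :
    ((univ : Finset (Fin p × Fin 4)).filter fun a => a.1 = k).card = 4 := by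
  have : ((univ : Finset (Fin p × Fin 4)).filter fun a => a.1 = k) = {k} ×ˢ univ := by
    ext a; simp only [Finset.mem_filter, Finset.mem_univ, true_and, Finset.mem_product,
      Finset.mem_singleton]
    exact ⟨fun h => ⟨h, trivial⟩, fun h => h.1⟩
  rw [this, Finset.card_product]
  simp

lemma count_consistent {n m p : ℕ} (hp : 0 < p) (F : Fin p × Fin 4 → Fin n)
    (hev : ∀ i, Even ((univ.filter fun a => F a = i)).card) :
    ((univ.filter fun J : Fin p → Fin m => ∀ a a', F a = F a' → J a.1 = J a'.1)).card *
      m ^ ((((univ.image F).filter fun i =>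
        ((univ.filter fun a => F a = i)).card = 2).card + 1) / 2)
      ≤ m ^ (univ.image F).card := by
  classical
  rcases Nat.eq_zero_or_pos m with hm | hm
  · subst hm
    have : ((univ : Finset (Fin p → Fin 0)) : Finset _) = ∅ := by
      ext J; exact absurd (J ⟨0, hp⟩).isLt (by omega)
    simp [Finset.filter_congr_decidable, this, Finset.filter_empty]
  set rel : Fin p → Fin p → Prop :=
    fun k k' => ∃ a a' : Fin p × Fin 4, F a = F a' ∧ a.1 = k ∧ a'.1 = k' with hrel
  set s : Setoid (Fin p) := Relation.EqvGen.setoid rel with hs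
  haveI : Fintype (Quotient s) := Fintype.ofFinite _
  -- consistent J respects EqvGen
  have respects : ∀ J : Fin p → Fin m, (∀ a a', F a = F a' → J a.1 = J a'.1) →
      ∀ k k', Relation.EqvGen rel k k' → J k = J k' := by
    intro J hJ k k' h
    induction h with
    | rel a b h => obtain ⟨x, y, hxy, hx, hy⟩ := h; rw [← hx, ← hy]; exact hJ x y hxy
    | refl => rfl
    | symm a b _ ih => exact ih.symm
    | trans a b c _ _ ih1 ih2 => exact ih1.trans ih2
  -- Step 1 : N ≤ m ^ card (Quotient s)
  have step1 : ((univ.filter fun J : Fin p → Fin m =>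
      ∀ a a', F a = F a' → J a.1 = J a'.1)).card ≤ m ^ Fintype.card (Quotient s) := by
    have : m ^ Fintype.card (Quotient s) = (univ : Finset (Quotient s → Fin m)).card := by
      rw [Finset.card_univ, Fintype.card_fun, Fintype.card_fin]
    rw [this]
    apply Finset.card_le_card_of_injOn (fun J => fun q => J q.out)
    · intro _ _; exact Finset.mem_univ _
    · intro J hJ J' hJ' hEq
      simp only [Finset.coe_filter, Set.mem_setOf_eq, Finset.mem_univ, true_and] at hJ hJ'
      funext k
      have hout : Relation.EqvGen rel k (Quotient.mk s k).out :=
        Relation.EqvGen.symm _ _ (Quotient.exact (Quotient.out_eq (Quotient.mk s k)))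
      have h1 : J k = J (Quotient.mk s k).out := respects J hJ _ _ hout
      have h2 : J' k = J' (Quotient.mk s k).out := respects J' hJ' _ _ hout
      rw [h1, h2]
      exact congrFun hEq (Quotient.mk s k)
  -- Step 2 : card (Quotient s) + (t+1)/2 ≤ r
  set R : Finset (Fin n) := univ.image F with hR
  set mlt : Fin n → ℕ := fun i => ((univ.filter fun a => F a = i)).card with hmlt
  set cq : Fin n → Quotient s := fun i =>
    if h : ∃ a, F a = i then Quotient.mk s h.choose.1 else Quotient.mk s ⟨0, hp⟩ with hcq
  have key : ∀ a, cq (F a) = Quotient.mk s a.1 := by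
    intro a
    have hex : ∃ a', F a' = F a := ⟨a, rfl⟩
    rw [hcq]
    simp only [dif_pos hex]
    apply Quotient.sound
    exact Relation.EqvGen.rel _ _ ⟨hex.choose, a, hex.choose_spec, rfl, rfl⟩
  have hmlt' : ∀ i, mlt i = ((univ.filter fun a => F a = i)).card := fun i => by rw [hmlt]
  have hRmem : ∀ a : Fin p × Fin 4, F a ∈ R := fun a =>
    Finset.mem_image.mpr ⟨a, Finset.mem_univ _, rfl⟩
  clear_value mlt cq R s rel
  have mult_ge : ∀ i ∈ R, 2 ≤ mlt i := by
    intro i hi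
    obtain ⟨a, -, rfl⟩ := Finset.mem_image.mp (hR ▸ hi)
    have hpos : 0 < mlt (F a) := by
      rw [hmlt']
      exact Finset.card_pos.mpr ⟨a, by simp⟩
    obtain ⟨c, hc⟩ := hev (F a)
    rw [← hmlt'] at hc
    clear step1 respects
    omega
  -- per-component inequality
  have perq : ∀ q : Quotient s,
      2 + ((R.filter fun i => mlt i = 2).filter fun i => cq i = q).card ≤
      2 * (R.filter fun i => cq i = q).card := by
    intro q
    obtain ⟨k, hk⟩ := Quotient.exists_rep q
    set Rq := R.filter fun i => cq i = q with hRq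
    set Tq := (R.filter fun i => mlt i = 2).filter fun i => cq i = q with hTq
    have hsub : Tq ⊆ Rq := by
      intro i hi
      simp only [hTq, hRq, Finset.mem_filter] at hi ⊢
      exact ⟨hi.1.1, hi.2⟩
    have htr : Tq.card ≤ Rq.card := Finset.card_le_card hsub
    have hrq1 : 0 < Rq.card := by
      apply Finset.card_pos.mpr
      refine ⟨F (k, 0), ?_⟩
      simp only [hRq, Finset.mem_filter]
      constructor
      · exact hRmem (k, 0)
      · rw [key]; exact hk ▸ rfl
    rcases Nat.lt_or_ge Tq.card Rq.card with hlt | hge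
    · clear respects step1; omega
    -- all multiplicities 2 in this component
    have hTR : Tq = Rq := Finset.eq_of_subset_of_card_le hsub hge
    set Sq := (univ : Finset (Fin p × Fin 4)).filter fun a => Quotient.mk s a.1 = q with hSq
    have hmap : ∀ a ∈ Sq, F a ∈ Rq := by
      intro a ha
      simp only [hSq, Finset.mem_filter, Finset.mem_univ, true_and] at ha
      simp only [hRq, Finset.mem_filter]
      exact ⟨hRmem a, by rw [key]; exact ha⟩
    have hSm : Sq.card = ∑ i ∈ Rq, mlt i := by
      rw [Finset.card_eq_sum_card_fiberwise hmap]
      apply Finset.sum_congr rfl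
      intro i hi
      rw [hmlt']
      congr 1
      ext a
      simp only [hSq, Finset.mem_filter, Finset.mem_univ, true_and]
      constructor
      · exact fun h => h.2
      · intro h
        refine ⟨?_, h⟩
        have := key a
        rw [h] at this
        rw [← this]
        exact (Finset.mem_filter.mp hi).2
    have hSp : Sq.card = 4 * ((univ : Finset (Fin p)).filter
        fun k' => Quotient.mk s k' = q).card := by
      have hmap2 : ∀ a ∈ Sq, a.1 ∈ (univ : Finset (Fin p)).filter
          fun k' => Quotient.mk s k' = q := by
        intro a ha
        simp only [hSq, Finset.mem_filter, Finset.mem_univ, true_and] at ha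
        simp only [Finset.mem_filter, Finset.mem_univ, true_and]
        exact ha
      rw [Finset.card_eq_sum_card_fiberwise hmap2]
      have hfib : ∀ k' ∈ (univ : Finset (Fin p)).filter (fun k' => Quotient.mk s k' = q),
          (Sq.filter fun a => a.1 = k').card = 4 := by
        intro k' hk'
        have : Sq.filter (fun a => a.1 = k') =
            (univ : Finset (Fin p × Fin 4)).filter fun a => a.1 = k' := by
          ext a
          simp only [hSq, Finset.mem_filter, Finset.mem_univ, true_and]
          constructor
          · exact fun h => h.2
          · intro h
            refine ⟨?_, h⟩
            rw [h]
            exact (Finset.mem_filter.mp hk').2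
        rw [this, card_fst_fiber]
      rw [Finset.sum_congr rfl hfib, Finset.sum_const, smul_eq_mul, mul_comm]
    have hpq1 : 0 < ((univ : Finset (Fin p)).filter
        fun k' => Quotient.mk s k' = q).card :=
      Finset.card_pos.mpr ⟨k, Finset.mem_filter.mpr ⟨Finset.mem_univ _, hk⟩⟩
    have hall2 : ∑ i ∈ Rq, mlt i = 2 * Rq.card := by
      have h2 : ∀ i ∈ Rq, mlt i = 2 := by
        intro i hi
        rw [← hTR] at hi
        simp only [hTq, Finset.mem_filter] at hi
        exact hi.1.2
      rw [Finset.sum_congr rfl h2, Finset.sum_const, smul_eq_mul, mul_comm]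
    clear respects step1; omega
  -- sum over components
  have c_eq : Fintype.card (Quotient s) = ∑ _q : Quotient s, 1 := by
    rw [← Finset.card_univ, Finset.card_eq_sum_ones]
  have r_eq : R.card = ∑ q : Quotient s, (R.filter fun i => cq i = q).card :=
    Finset.card_eq_sum_card_fiberwise (fun i _ => Finset.mem_univ (cq i))
  have t_eq : (R.filter fun i => mlt i = 2).card =
      ∑ q : Quotient s, ((R.filter fun i => mlt i = 2).filter fun i => cq i = q).card :=
    Finset.card_eq_sum_card_fiberwise (fun i _ => Finset.mem_univ (cq i))
  have sumineq : 2 * Fintype.card (Quotient s) + (R.filter fun i => mlt i = 2).card ≤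
      2 * R.card := by
    rw [c_eq, r_eq, t_eq, Finset.mul_sum, Finset.mul_sum, ← Finset.sum_add_distrib]
    apply Finset.sum_le_sum
    intro q _
    have h := perq q
    clear respects step1 perq
    omega
  have step2 : Fintype.card (Quotient s) + ((R.filter fun i => mlt i = 2).card + 1) / 2
      ≤ R.card := by clear respects step1 perq; omega
  simp only [← hmlt']
  calc ((univ.filter fun J : Fin p → Fin m =>
      ∀ a a', F a = F a' → J a.1 = J a'.1)).card * m ^ (((R.filter fun i => mlt i = 2).card + 1) / 2)
      ≤ m ^ Fintype.card (Quotient s) * m ^ (((R.filter fun i => mlt i = 2).card + 1) / 2) :=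
        Nat.mul_le_mul_right _ step1
    _ = m ^ (Fintype.card (Quotient s) + ((R.filter fun i => mlt i = 2).card + 1) / 2) :=
        (pow_add m _ _).symm
    _ ≤ m ^ R.card := Nat.pow_le_pow_right hm step2

lemma momentx {n p : ℕ} (μ : (Fin n → Bool) → ℝ) (hμ1 : ∑ x, μ x = 1)
    (hμind : ∀ S : Finset (Fin n), S.Nonempty → S.card ≤ 4 * p →
      (∑ x, μ x * ∏ i ∈ S, pm (x i)) = 0)
    (F : Fin p × Fin 4 → Fin n) :
    (∑ x, μ x * ∏ a : Fin p × Fin 4, pm (x (F a))) =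
      if ∀ i, Even ((univ.filter fun a => F a = i)).card then 1 else 0 := by
  classical
  set S : Finset (Fin n) := univ.filter fun i => ¬ Even ((univ.filter fun a => F a = i)).card
    with hS
  have key : ∀ x : Fin n → Bool,
      (∏ a : Fin p × Fin 4, pm (x (F a))) = ∏ i ∈ S, pm (x i) := by
    intro x
    have h1 : ∏ a : Fin p × Fin 4, pm (x (F a)) =
        ∏ i : Fin n, ∏ a ∈ univ.filter fun a => F a = i, pm (x (F a)) :=
      (Finset.prod_fiberwise_of_maps_to (fun a _ => Finset.mem_univ (F a)) _).symm
    rw [h1]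
    have h2 : ∀ i : Fin n, (∏ a ∈ univ.filter fun a => F a = i, pm (x (F a))) =
        if Even ((univ.filter fun a => F a = i)).card then 1 else pm (x i) := by
      intro i
      rw [Finset.prod_congr rfl (g := fun _ => pm (x i))
        (fun a ha => by rw [(Finset.mem_filter.mp ha).2]), Finset.prod_const, pm_pow]
    rw [Finset.prod_congr rfl fun i _ => h2 i]
    rw [← Finset.prod_filter_mul_prod_filter_not univ
      (fun i => Even ((univ.filter fun a => F a = i)).card)]
    rw [Finset.prod_congr rfl (g := fun _ => (1:ℝ)) (fun i hi => by
      rw [if_pos (Finset.mem_filter.mp hi).2]), Finset.prod_const_one, one_mul]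
    apply Finset.prod_congr rfl
    intro i hi
    rw [if_neg (Finset.mem_filter.mp hi).2]
  rw [Finset.sum_congr rfl fun x _ => by rw [key x]]
  by_cases hall : ∀ i, Even ((univ.filter fun a => F a = i)).card
  · have : S = ∅ := by
      rw [hS, Finset.filter_eq_empty_iff]
      intro i _
      exact not_not_intro (hall i)
    rw [if_pos hall, this]
    simpa using hμ1
  · rw [if_neg hall]
    push_neg at hall
    obtain ⟨i₀, hi₀⟩ := hall
    apply hμind S ⟨i₀, Finset.mem_filter.mpr ⟨Finset.mem_univ _, hi₀⟩⟩
    calc S.card ≤ (univ.image F).card := by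
          apply Finset.card_le_card
          intro i hi
          simp only [hS, Finset.mem_filter, Finset.mem_univ, true_and] at hi
          have : 0 < ((univ.filter fun a => F a = i)).card := by
            rcases Nat.eq_zero_or_pos ((univ.filter fun a => F a = i)).card with h | h
            · exact absurd (h ▸ Even.zero) hi
            · exact h
          obtain ⟨a, ha⟩ := Finset.card_pos.mp this
          exact Finset.mem_image.mpr ⟨a, Finset.mem_univ _, (Finset.mem_filter.mp ha).2⟩
      _ ≤ (univ : Finset (Fin p × Fin 4)).card := Finset.card_image_le.trans
          (le_of_eq rfl)
      _ ≤ 4 * p := by simp [Finset.card_univ]; omega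

lemma stepC {n m p : ℕ} (hm : 0 < m) (ν : (Fin n → Fin m) → ℝ)
    (hνind : ∀ T : Finset (Fin n), T.card ≤ 4 * p → ∀ j : Fin n → Fin m,
      (∑ h, ν h * (if ∀ i ∈ T, h i = j i then (1:ℝ) else 0)) = (1 / (m:ℝ)) ^ T.card)
    (F : Fin p × Fin 4 → Fin n) (J : Fin p → Fin m)
    (hcons : ∀ a a', F a = F a' → J a.1 = J a'.1) :
    (∑ h, ν h * ∏ a : Fin p × Fin 4, (if h (F a) = J a.1 then (1:ℝ) else 0)) =
      (1 / (m:ℝ)) ^ (univ.image F).card := by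
  classical
  set j : Fin n → Fin m := fun i =>
    if hi : ∃ a, F a = i then J hi.choose.1 else ⟨0, hm⟩ with hj
  have hjF : ∀ a, j (F a) = J a.1 := by
    intro a
    have hex : ∃ a', F a' = F a := ⟨a, rfl⟩
    rw [hj]
    simp only [dif_pos hex]
    exact hcons _ _ hex.choose_spec
  have key : ∀ h : Fin n → Fin m,
      (∏ a : Fin p × Fin 4, (if h (F a) = J a.1 then (1:ℝ) else 0)) =
      (if ∀ i ∈ univ.image F, h i = j i then (1:ℝ) else 0) := by
    intro h
    by_cases hc : ∀ i ∈ univ.image F, h i = j i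
    · rw [if_pos hc]
      apply Finset.prod_eq_one
      intro a _
      rw [if_pos]
      rw [← hjF a]
      exact hc (F a) (Finset.mem_image.mpr ⟨a, Finset.mem_univ _, rfl⟩)
    · rw [if_neg hc]
      push_neg at hc
      obtain ⟨i, hi, hne⟩ := hc
      obtain ⟨a, -, rfl⟩ := Finset.mem_image.mp hi
      apply Finset.prod_eq_zero (Finset.mem_univ a)
      rw [if_neg]
      rw [hjF a] at hne
      exact hne
  rw [Finset.sum_congr rfl fun h _ => by rw [key h]]
  apply hνind
  calc (univ.image F).card ≤ (univ : Finset (Fin p × Fin 4)).card := Finset.card_image_le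
    _ ≤ 4 * p := by simp [Finset.card_univ]; omega

lemma stepC0 {n m p : ℕ} (ν : (Fin n → Fin m) → ℝ)
    (F : Fin p × Fin 4 → Fin n) (J : Fin p → Fin m)
    (hcons : ¬ ∀ a a', F a = F a' → J a.1 = J a'.1) :
    (∑ h, ν h * ∏ a : Fin p × Fin 4, (if h (F a) = J a.1 then (1:ℝ) else 0)) = 0 := by
  push_neg at hcons
  obtain ⟨a, a', hFa, hJ⟩ := hcons
  apply Finset.sum_eq_zero
  intro h _
  by_cases h1 : h (F a) = J a.1
  · have h2 : ¬ (h (F a') = J a'.1) := by rw [← hFa, h1]; exact hJ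
    rw [Finset.prod_eq_zero (Finset.mem_univ a')
      (show (if h (F a') = J a'.1 then (1:ℝ) else 0) = 0 from if_neg h2), mul_zero]
  · rw [Finset.prod_eq_zero (Finset.mem_univ a)
      (show (if h (F a) = J a.1 then (1:ℝ) else 0) = 0 from if_neg h1), mul_zero]

lemma expand {n m p : ℕ} (v : Fin n → ℝ) (h : Fin n → Fin m) (x : Fin n → Bool) :
    (∑ j : Fin m, (∑ i ∈ univ.filter fun i => h i = j, v i * pm (x i)) ^ 4) ^ p =
    ∑ F : Fin p × Fin 4 → Fin n, ∑ J : Fin p → Fin m,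
      ((∏ a : Fin p × Fin 4, v (F a)) * (∏ a : Fin p × Fin 4, pm (x (F a))) *
      (∏ a : Fin p × Fin 4, if h (F a) = J a.1 then (1:ℝ) else 0)) := by
  classical
  set c : Fin m → Fin n → ℝ := fun j i => if h i = j then v i * pm (x i) else 0 with hc
  have h1 : ∀ j : Fin m, (∑ i ∈ univ.filter fun i => h i = j, v i * pm (x i)) =
      ∑ i : Fin n, c j i := fun j => (Finset.sum_filter _ _)
  simp only [h1]
  have h2 : ∀ j : Fin m, (∑ i : Fin n, c j i) ^ 4 =
      ∑ G : Fin 4 → Fin n, ∏ l : Fin 4, c j (G l) := fun j => Fintype.sum_pow _ 4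
  simp only [h2]
  rw [Fintype.sum_pow]
  -- now : ∑ J : Fin p → Fin m, ∏ k, ∑ G, ∏ l, c (J k) (G l)
  have h3 : ∀ J : Fin p → Fin m, (∏ k : Fin p, ∑ G : Fin 4 → Fin n, ∏ l : Fin 4, c (J k) (G l))
      = ∑ Fc : Fin p → Fin 4 → Fin n, ∏ k : Fin p, ∏ l : Fin 4, c (J k) (Fc k l) :=
    fun J => Fintype.prod_sum _
  simp only [h3]
  rw [Finset.sum_comm]
  refine Finset.sum_nbij' (fun Fc => fun a : Fin p × Fin 4 => Fc a.1 a.2)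
    (fun F => fun k l => F (k, l)) (fun _ _ => Finset.mem_univ _) (fun _ _ => Finset.mem_univ _)
    (fun Fc _ => rfl) (fun F _ => rfl) ?_
  intro Fc _
  have h4 : ∀ J : Fin p → Fin m, (∏ k : Fin p, ∏ l : Fin 4, c (J k) (Fc k l)) =
      ∏ a : Fin p × Fin 4, c (J a.1) (Fc a.1 a.2) := by
    intro J
    rw [Fintype.prod_prod_type]
  apply Finset.sum_congr rfl
  intro J _
  rw [h4]
  have h5 : ∀ a : Fin p × Fin 4, c (J a.1) (Fc a.1 a.2) =
      v (Fc a.1 a.2) * pm (x (Fc a.1 a.2)) * (if h (Fc a.1 a.2) = J a.1 then (1:ℝ) else 0) := by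
    intro a
    rw [hc]
    by_cases hh : h (Fc a.1 a.2) = J a.1
    · simp [hh]
    · simp [hh]
  rw [Finset.prod_congr rfl fun a _ => h5 a, Finset.prod_mul_distrib, Finset.prod_mul_distrib]

lemma stepE_g {n m p : ℕ} {α : Type*} [DecidableEq α] (hm : 0 < m) (v : Fin n → ℝ)
    (Rg : Finset α) (e : α → ℕ)
    (hev : ∀ s ∈ Rg, Even (e s)) (hpos : ∀ s ∈ Rg, 1 ≤ e s)
    (hsum : ∑ s ∈ Rg, e s = 4 * p) :
    (1 / (m:ℝ)) ^ (((Rg.filter fun s => e s = 2).card + 1) / 2) *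
      ∏ s ∈ Rg, (∑ i, v i ^ e s) ≤
    ((∑ i, v i ^ 2) ^ 2 / m) ^ p + (∑ i, v i ^ 4) ^ p := by
  classical
  have hm1 : (1:ℝ) ≤ m := by exact_mod_cast hm
  have hmpos : (0:ℝ) < m := by exact_mod_cast hm
  set B2 : ℝ := ∑ i, v i ^ 2 with hB2
  set B4 : ℝ := ∑ i, v i ^ 4 with hB4
  have hB2nn : 0 ≤ B2 := Finset.sum_nonneg fun i _ => sq_nonneg _
  have hB4nn : 0 ≤ B4 := Finset.sum_nonneg fun i _ => by positivity
  set a' : ℝ := B2 ^ 2 / m with ha'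
  have ha'nn : 0 ≤ a' := by positivity
  set t : ℕ := (Rg.filter fun s => e s = 2).card with ht
  set u : ℕ := ∑ s ∈ Rg.filter (fun s => ¬ e s = 2), (e s / 2) with hu
  -- factor nonneg
  have hfacnn : ∀ s ∈ Rg, (0:ℝ) ≤ ∑ i, v i ^ e s := by
    intro s hs
    apply Finset.sum_nonneg
    intro i _
    exact (hev s hs).pow_nonneg _
  -- split product
  have hsplit : (∏ s ∈ Rg, (∑ i, v i ^ e s)) =
      B2 ^ t * ∏ s ∈ Rg.filter (fun s => ¬ e s = 2), (∑ i, v i ^ e s) := by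
    rw [← Finset.prod_filter_mul_prod_filter_not Rg (fun s => e s = 2)]
    congr 1
    rw [Finset.prod_congr rfl (g := fun _ => B2) ?_, Finset.prod_const, ht]
    intro s hs
    rw [(Finset.mem_filter.mp hs).2, hB2]
  -- big part bound
  have hbig : (∏ s ∈ Rg.filter (fun s => ¬ e s = 2), (∑ i, v i ^ e s)) ^ 2 ≤ B4 ^ u := by
    rw [← Finset.prod_pow, hu, ← Finset.prod_pow_eq_pow_sum]
    apply Finset.prod_le_prod
    · intro s hs
      exact pow_nonneg (hfacnn s (Finset.mem_filter.mp hs).1) 2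
    · intro s hs
      have hs1 := (Finset.mem_filter.mp hs).1
      have he4 : 4 ≤ e s := by
        obtain ⟨c, hc⟩ := hev s hs1
        have := hpos s hs1
        have := (Finset.mem_filter.mp hs).2
        omega
      have hhalf : 2 ≤ e s / 2 := by omega
      have key := sq_sum_pow_le univ (fun i => v i ^ 2) (fun i _ => sq_nonneg _) (e s / 2) hhalf
      have e1 : ∀ i : Fin n, (v i ^ 2) ^ (e s / 2) = v i ^ e s := by
        intro i
        rw [← pow_mul]
        congr 1
        obtain ⟨c, hc⟩ := hev s hs1
        omega
      have e2 : ∀ i : Fin n, (v i ^ 2) ^ 2 = v i ^ 4 := fun i => by ring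
      rw [Finset.sum_congr rfl (fun i _ => e1 i), Finset.sum_congr rfl (fun i _ => e2 i)] at key
      exact key
  -- exponent sum
  have htu : t + u = 2 * p := by
    have h1 : ∑ s ∈ Rg.filter (fun s => e s = 2), e s = 2 * t := by
      rw [Finset.sum_congr rfl (g := fun _ => 2) (fun s hs => (Finset.mem_filter.mp hs).2),
        Finset.sum_const, smul_eq_mul, ht, mul_comm]
    have h2 : ∑ s ∈ Rg.filter (fun s => ¬ e s = 2), e s = 2 * u := by
      rw [hu, Finset.mul_sum]
      apply Finset.sum_congr rfl
      intro s hs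
      obtain ⟨c, hc⟩ := hev s (Finset.mem_filter.mp hs).1
      omega
    have h3 := Finset.sum_filter_add_sum_filter_not Rg (fun s => e s = 2) e
    omega
  -- final AM-GM
  set X : ℝ := (1 / (m:ℝ)) ^ ((t + 1) / 2) * ∏ s ∈ Rg, (∑ i, v i ^ e s) with hX
  have hXnn : 0 ≤ X := by
    apply mul_nonneg (by positivity)
    exact Finset.prod_nonneg hfacnn
  have hXsq : X ^ 2 ≤ a' ^ t * B4 ^ u := by
    have h1 : X ^ 2 = ((1/(m:ℝ)) ^ ((t+1)/2)) ^ 2 * (B2 ^ t) ^ 2 *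
        (∏ s ∈ Rg.filter (fun s => ¬ e s = 2), (∑ i, v i ^ e s)) ^ 2 := by
      rw [hX, hsplit]; ring
    rw [h1]
    have h2 : ((1/(m:ℝ)) ^ ((t+1)/2)) ^ 2 ≤ (1/(m:ℝ)) ^ t := by
      rw [← pow_mul]
      apply pow_le_pow_of_le_one (by positivity) (by
        rw [div_le_one hmpos]; exact hm1)
      omega
    calc ((1/(m:ℝ)) ^ ((t+1)/2)) ^ 2 * (B2 ^ t) ^ 2 *
        (∏ s ∈ Rg.filter (fun s => ¬ e s = 2), (∑ i, v i ^ e s)) ^ 2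
        ≤ (1/(m:ℝ)) ^ t * (B2 ^ t) ^ 2 * B4 ^ u := by
          apply mul_le_mul (mul_le_mul_of_nonneg_right h2 (by positivity)) hbig
            (sq_nonneg _) (by positivity)
      _ = a' ^ t * B4 ^ u := by
          rw [ha', div_pow, div_pow, ← pow_mul]
          rw [show t * 2 = 2 * t from mul_comm t 2, pow_mul]
          field_simp
          rw [one_pow, one_mul]
  have hmax : a' ^ t * B4 ^ u ≤ (a' ^ p + B4 ^ p) ^ 2 := by
    rcases le_total a' B4 with hab | hab
    · calc a' ^ t * B4 ^ u ≤ B4 ^ t * B4 ^ u :=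
            mul_le_mul_of_nonneg_right (pow_le_pow_left₀ ha'nn hab t) (pow_nonneg hB4nn u)
        _ = (B4 ^ p) ^ 2 := by rw [← pow_add, htu, ← pow_mul, mul_comm]
        _ ≤ (a' ^ p + B4 ^ p) ^ 2 := by
            apply pow_le_pow_left₀ (pow_nonneg hB4nn p)
            nlinarith [pow_nonneg ha'nn p]
    · calc a' ^ t * B4 ^ u ≤ a' ^ t * a' ^ u :=
            mul_le_mul_of_nonneg_left (pow_le_pow_left₀ hB4nn hab u) (pow_nonneg ha'nn t)
        _ = (a' ^ p) ^ 2 := by rw [← pow_add, htu, ← pow_mul, mul_comm]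
        _ ≤ (a' ^ p + B4 ^ p) ^ 2 := by
            apply pow_le_pow_left₀ (pow_nonneg ha'nn p)
            nlinarith [pow_nonneg hB4nn p]
  have hfin : X ^ 2 ≤ (a' ^ p + B4 ^ p) ^ 2 := hXsq.trans hmax
  have : X ≤ a' ^ p + B4 ^ p := by
    have hnn : (0:ℝ) ≤ a' ^ p + B4 ^ p := by positivity
    nlinarith
  exact this

lemma choose_congr {α : Type*} {s t : Finset α} (hs : s.Nonempty) (ht : t.Nonempty)
    (h : s = t) : hs.choose = ht.choose := by
  subst h
  rcases Subsingleton.elim hs ht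
  rfl

/-- canonical fiber representative map -/
noncomputable def canon {n p : ℕ} (F : Fin p × Fin 4 → Fin n) :
    Fin p × Fin 4 → Fin p × Fin 4 :=
  fun a => (show (univ.filter fun b => F b = F a).Nonempty from ⟨a, by simp⟩).choose

lemma canon_spec {n p : ℕ} (F : Fin p × Fin 4 → Fin n) (a : Fin p × Fin 4) :
    F (canon F a) = F a := by
  have := (show (univ.filter fun b => F b = F a).Nonempty from ⟨a, by simp⟩).choose_spec
  exact (Finset.mem_filter.mp this).2

lemma canon_eq_iff {n p : ℕ} (F : Fin p × Fin 4 → Fin n) (a a' : Fin p × Fin 4) :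
    canon F a = canon F a' ↔ F a = F a' := by
  constructor
  · intro h
    rw [← canon_spec F a, h, canon_spec F a']
  · intro h
    exact choose_congr _ _ (by rw [h])

lemma canon_idem {n p : ℕ} (F : Fin p × Fin 4 → Fin n) (a : Fin p × Fin 4) :
    canon F (canon F a) = canon F a :=
  (canon_eq_iff F _ _).mpr (canon_spec F a)

lemma fiber_sum {n p : ℕ} (v : Fin n → ℝ) (g : Fin p × Fin 4 → Fin p × Fin 4)
    (S : Finset (Fin p × Fin 4 → Fin n))
    (hSg : ∀ F ∈ S, ∀ a, F (g a) = F a)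
    (hev : ∀ s ∈ univ.image g, Even ((univ.filter fun a => g a = s).card)) :
    ∑ F ∈ S, ∏ s ∈ univ.image g, v (F s) ^ ((univ.filter fun a => g a = s).card) ≤
      ∏ s ∈ univ.image g, (∑ i, v i ^ ((univ.filter fun a => g a = s).card)) := by
  classical
  set Rg := univ.image g with hRg
  set e : Fin p × Fin 4 → ℕ := fun s => ((univ.filter fun a => g a = s)).card with he
  set Y : (∀ s ∈ Rg, Fin n) → ℝ :=
    fun π => ∏ x ∈ Rg.attach, v (π x.1 x.2) ^ e x.1 with hY
  have hprodsum : ∏ s ∈ Rg, (∑ i, v i ^ e s) = ∑ π ∈ Rg.pi (fun _ => univ), Y π :=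
    Finset.prod_sum Rg (fun _ => univ) (fun s i => v i ^ e s)
  rw [hprodsum]
  set ι : (Fin p × Fin 4 → Fin n) → (∀ s ∈ Rg, Fin n) := fun F => fun s _ => F s with hι
  have hterm : ∀ F ∈ S, (∏ s ∈ Rg, v (F s) ^ e s) = Y (ι F) := by
    intro F _
    rw [hY]
    exact (Finset.prod_attach Rg (fun s => v (F s) ^ e s)).symm
  rw [Finset.sum_congr rfl hterm]
  have hinj : ∀ F ∈ S, ∀ F' ∈ S, ι F = ι F' → F = F' := by
    intro F hF F' hF' hEq
    funext a
    have hmem : g a ∈ Rg := Finset.mem_image.mpr ⟨a, Finset.mem_univ _, rfl⟩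
    have h1 : F (g a) = F' (g a) := by
      have := congrFun (congrFun hEq (g a))
      exact congrFun (congrFun hEq (g a)) hmem
    rw [← hSg F hF a, ← hSg F' hF' a, h1]
  rw [← Finset.sum_image hinj]
  apply Finset.sum_le_sum_of_subset_of_nonneg
  · intro π hπ
    rw [Finset.mem_pi]
    intro s _
    exact Finset.mem_univ _
  · intro π _ _
    rw [hY]
    apply Finset.prod_nonneg
    intro x _
    exact (hev x.1 x.2).pow_nonneg _

theorem stmt9 : ∃ C : ℝ, 0 < C ∧ ∀ (n m : ℕ), 0 < m → ∀ (p : ℕ), 2 ≤ p → Even p →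
    ∀ (ν : (Fin n → Fin m) → ℝ), (∀ h, 0 ≤ ν h) → (∑ h, ν h = 1) →
    -- ν is a 4p-wise independent hash family
    (∀ (T : Finset (Fin n)), T.card ≤ 4 * p → ∀ j : Fin n → Fin m,
      (∑ h, ν h * (if ∀ i ∈ T, h i = j i then (1:ℝ) else 0)) = (1 / (m:ℝ)) ^ T.card) →
    ∀ (μ : (Fin n → Bool) → ℝ), (∀ x, 0 ≤ μ x) → (∑ x, μ x = 1) →
    -- μ is a 4p-wise independent distribution over {±1}ⁿ
    (∀ S : Finset (Fin n), S.Nonempty → S.card ≤ 4 * p →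
      (∑ x, μ x * ∏ i ∈ S, pm (x i)) = 0) →
    ∀ v : Fin n → ℝ,
    ∑ h, ∑ x, ν h * μ x *
      (∑ j : Fin m, (∑ i ∈ univ.filter fun i => h i = j, v i * pm (x i)) ^ 4) ^ p ≤
      (C * p) ^ (4 * p) * ((∑ i, v i ^ 2) ^ 2 / m) ^ p
      + (C * p) ^ (4 * p) * (∑ i, v i ^ 4) ^ p := by
  classical
  refine ⟨4, by norm_num, ?_⟩
  intro n m hm p hp2 hpe ν hν0 hν1 hνind μ hμ0 hμ1 hμind v
  have hp : 0 < p := by omega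
  set B2 : ℝ := ∑ i, v i ^ 2 with hB2
  set B4 : ℝ := ∑ i, v i ^ 4 with hB4
  -- Step A : full expansion
  have hA : (∑ h, ∑ x, ν h * μ x *
      (∑ j : Fin m, (∑ i ∈ univ.filter fun i => h i = j, v i * pm (x i)) ^ 4) ^ p)
      = ∑ F : Fin p × Fin 4 → Fin n,
          (∏ a : Fin p × Fin 4, v (F a)) * (∑ x, μ x * ∏ a : Fin p × Fin 4, pm (x (F a))) *
          (∑ J : Fin p → Fin m, ∑ h, ν h *
            ∏ a : Fin p × Fin 4, if h (F a) = J a.1 then (1:ℝ) else 0) := by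
    calc (∑ h, ∑ x, ν h * μ x *
        (∑ j : Fin m, (∑ i ∈ univ.filter fun i => h i = j, v i * pm (x i)) ^ 4) ^ p)
        = ∑ h, ∑ x, ∑ F : Fin p × Fin 4 → Fin n, ∑ J : Fin p → Fin m,
            (ν h * μ x) * ((∏ a : Fin p × Fin 4, v (F a)) *
              (∏ a : Fin p × Fin 4, pm (x (F a))) *
              (∏ a : Fin p × Fin 4, if h (F a) = J a.1 then (1:ℝ) else 0)) := by
          apply Finset.sum_congr rfl; intro h _
          apply Finset.sum_congr rfl; intro x _
          rw [expand v h x, Finset.mul_sum]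
          apply Finset.sum_congr rfl; intro F _
          rw [Finset.mul_sum]
      _ = ∑ F : Fin p × Fin 4 → Fin n, ∑ h, ∑ x, ∑ J : Fin p → Fin m,
            (ν h * μ x) * ((∏ a : Fin p × Fin 4, v (F a)) *
              (∏ a : Fin p × Fin 4, pm (x (F a))) *
              (∏ a : Fin p × Fin 4, if h (F a) = J a.1 then (1:ℝ) else 0)) := by
          rw [Finset.sum_congr rfl (fun h _ => Finset.sum_comm)]
          exact Finset.sum_comm
      _ = ∑ F : Fin p × Fin 4 → Fin n, ∑ J : Fin p → Fin m, ∑ h, ∑ x,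
            (ν h * μ x) * ((∏ a : Fin p × Fin 4, v (F a)) *
              (∏ a : Fin p × Fin 4, pm (x (F a))) *
              (∏ a : Fin p × Fin 4, if h (F a) = J a.1 then (1:ℝ) else 0)) := by
          apply Finset.sum_congr rfl; intro F _
          rw [Finset.sum_congr rfl (fun h _ => Finset.sum_comm)]
          exact Finset.sum_comm
      _ = ∑ F : Fin p × Fin 4 → Fin n,
            (∏ a : Fin p × Fin 4, v (F a)) * (∑ x, μ x * ∏ a : Fin p × Fin 4, pm (x (F a))) *
            (∑ J : Fin p → Fin m, ∑ h, ν h *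
              ∏ a : Fin p × Fin 4, if h (F a) = J a.1 then (1:ℝ) else 0) := by
          apply Finset.sum_congr rfl; intro F _
          rw [Finset.mul_sum]
          apply Finset.sum_congr rfl; intro J _
          calc ∑ h, ∑ x, (ν h * μ x) * ((∏ a : Fin p × Fin 4, v (F a)) *
                (∏ a : Fin p × Fin 4, pm (x (F a))) *
                (∏ a : Fin p × Fin 4, if h (F a) = J a.1 then (1:ℝ) else 0))
              = ∑ h, (ν h * (∏ a : Fin p × Fin 4, if h (F a) = J a.1 then (1:ℝ) else 0)) *
                  ∑ x, (μ x * ∏ a : Fin p × Fin 4, pm (x (F a))) *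
                    (∏ a : Fin p × Fin 4, v (F a)) := by
                apply Finset.sum_congr rfl; intro h _
                rw [Finset.mul_sum]
                apply Finset.sum_congr rfl; intro x _
                ring
            _ = (∑ h, ν h * (∏ a : Fin p × Fin 4, if h (F a) = J a.1 then (1:ℝ) else 0)) *
                  ((∑ x, μ x * ∏ a : Fin p × Fin 4, pm (x (F a))) *
                    (∏ a : Fin p × Fin 4, v (F a))) := by
                rw [← Finset.sum_mul, ← Finset.sum_mul]
            _ = (∏ a : Fin p × Fin 4, v (F a)) *
                  (∑ x, μ x * ∏ a : Fin p × Fin 4, pm (x (F a))) *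
                  (∑ h, ν h * (∏ a : Fin p × Fin 4,
                    if h (F a) = J a.1 then (1:ℝ) else 0)) := by ring
  rw [hA]
  -- Step B : x-moments
  have hB : ∀ F : Fin p × Fin 4 → Fin n,
      (∑ x, μ x * ∏ a : Fin p × Fin 4, pm (x (F a))) =
        if (∀ i, Even ((univ.filter fun a => F a = i)).card) then (1:ℝ) else 0 :=
    fun F => momentx μ hμ1 hμind F
  rw [Finset.sum_congr rfl fun F _ => by rw [hB F]]
  -- restrict to even F
  have hres : (∑ F : Fin p × Fin 4 → Fin n,
      (∏ a : Fin p × Fin 4, v (F a)) *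
        (if (∀ i, Even ((univ.filter fun a => F a = i)).card) then (1:ℝ) else 0) *
        (∑ J : Fin p → Fin m, ∑ h, ν h *
          ∏ a : Fin p × Fin 4, if h (F a) = J a.1 then (1:ℝ) else 0))
      = ∑ F ∈ (univ : Finset (Fin p × Fin 4 → Fin n)).filter
          (fun F => ∀ i, Even ((univ.filter fun a => F a = i)).card),
          (∏ a : Fin p × Fin 4, v (F a)) *
          (∑ J : Fin p → Fin m, ∑ h, ν h *
            ∏ a : Fin p × Fin 4, if h (F a) = J a.1 then (1:ℝ) else 0) := by
    rw [Finset.sum_filter]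
    apply Finset.sum_congr rfl
    intro F _
    by_cases hc : ∀ i, Even ((univ.filter fun a => F a = i)).card
    · rw [if_pos hc, if_pos hc, mul_one]
    · rw [if_neg hc, if_neg hc, mul_zero, zero_mul]
  rw [hres]
  -- Step C+D : the J,h-sum is at most (1/m)^⌈t/2⌉, and ∏ v (F a) = ∏ v i ^ mult
  set Ev : Finset (Fin p × Fin 4 → Fin n) := (univ : Finset (Fin p × Fin 4 → Fin n)).filter
      (fun F => ∀ i, Even ((univ.filter fun a => F a = i)).card) with hEv
  have hVfib : ∀ F : Fin p × Fin 4 → Fin n,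
      (∏ a : Fin p × Fin 4, v (F a)) =
      ∏ i : Fin n, v i ^ ((univ.filter fun a => F a = i)).card := by
    intro F
    rw [← Finset.prod_fiberwise_of_maps_to (fun a _ => Finset.mem_univ (F a)) (fun a => v (F a))]
    apply Finset.prod_congr rfl
    intro i _
    rw [Finset.prod_congr rfl (g := fun _ => v i)
      (fun a ha => by rw [(Finset.mem_filter.mp ha).2]), Finset.prod_const]
  have hW2nn : ∀ F ∈ Ev, (0:ℝ) ≤ ∏ i : Fin n, v i ^ ((univ.filter fun a => F a = i)).card := by
    intro F hF
    have hFev := (Finset.mem_filter.mp hF).2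
    exact Finset.prod_nonneg fun i _ => (hFev i).pow_nonneg _
  have hHQ : ∀ F ∈ Ev,
      (∑ J : Fin p → Fin m, ∑ h, ν h *
        ∏ a : Fin p × Fin 4, if h (F a) = J a.1 then (1:ℝ) else 0) ≤
      (1/(m:ℝ)) ^ ((((univ.image F).filter fun i =>
        ((univ.filter fun a => F a = i)).card = 2).card + 1) / 2) := by
    intro F hF
    have hFev := (Finset.mem_filter.mp hF).2
    have hsplit : (∑ J : Fin p → Fin m, ∑ h, ν h *
        ∏ a : Fin p × Fin 4, if h (F a) = J a.1 then (1:ℝ) else 0) =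
        (((univ : Finset (Fin p → Fin m)).filter
          (fun J => ∀ a a', F a = F a' → J a.1 = J a'.1)).card : ℝ) *
          (1/(m:ℝ)) ^ (univ.image F).card := by
      rw [← Finset.sum_filter_add_sum_filter_not univ
        (fun J : Fin p → Fin m => ∀ a a', F a = F a' → J a.1 = J a'.1)]
      rw [Finset.sum_congr rfl (fun J hJ => stepC hm ν hνind F J (Finset.mem_filter.mp hJ).2),
        Finset.sum_const,
        Finset.sum_congr rfl (fun J hJ => stepC0 ν F J (Finset.mem_filter.mp hJ).2),
        Finset.sum_const_zero, add_zero, nsmul_eq_mul]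
    rw [hsplit]
    -- now use count_consistent
    have hnat := count_consistent (n := n) (m := m) hp F hFev
    have hm0 : (0:ℝ) < m := by exact_mod_cast hm
    have hcast : ((((univ : Finset (Fin p → Fin m)).filter
        (fun J => ∀ a a', F a = F a' → J a.1 = J a'.1)).card : ℝ) *
        (m:ℝ) ^ ((((univ.image F).filter fun i =>
          ((univ.filter fun a => F a = i)).card = 2).card + 1) / 2)
        ≤ (m:ℝ) ^ (univ.image F).card) := by exact_mod_cast hnat
    rw [one_div, inv_pow, inv_pow, ← one_div, ← one_div]
    rw [mul_one_div, div_le_div_iff₀ (by positivity) (by positivity), one_mul]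
    exact hcast
  have hHQnn : ∀ F : Fin p × Fin 4 → Fin n, (0:ℝ) ≤
      ∑ J : Fin p → Fin m, ∑ h, ν h *
        ∏ a : Fin p × Fin 4, if h (F a) = J a.1 then (1:ℝ) else 0 := by
    intro F
    apply Finset.sum_nonneg; intro J _
    apply Finset.sum_nonneg; intro h _
    apply mul_nonneg (hν0 h)
    apply Finset.prod_nonneg; intro a _
    split <;> norm_num
  -- bound by the weighted sums
  have hstep : (∑ F ∈ Ev, (∏ a : Fin p × Fin 4, v (F a)) *
      (∑ J : Fin p → Fin m, ∑ h, ν h *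
        ∏ a : Fin p × Fin 4, if h (F a) = J a.1 then (1:ℝ) else 0))
      ≤ ∑ F ∈ Ev, (∏ i : Fin n, v i ^ ((univ.filter fun a => F a = i)).card) *
        (1/(m:ℝ)) ^ ((((univ.image F).filter fun i =>
          ((univ.filter fun a => F a = i)).card = 2).card + 1) / 2) := by
    apply Finset.sum_le_sum
    intro F hF
    rw [hVfib F]
    exact mul_le_mul_of_nonneg_left (hHQ F hF) (hW2nn F hF)
  apply le_trans hstep
  -- fiberwise over the canonical representative map
  rw [← Finset.sum_fiberwise_of_maps_to (g := fun F => canon F)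
    (fun F _ => Finset.mem_univ (canon F))]
  have hm0 : (0:ℝ) < m := by exact_mod_cast hm
  have hB4nn : (0:ℝ) ≤ B4 := by
    rw [hB4]; exact Finset.sum_nonneg fun i _ => by positivity
  have hB2nn : (0:ℝ) ≤ B2 := by
    rw [hB2]; exact Finset.sum_nonneg fun i _ => sq_nonneg _
  have habnn : (0:ℝ) ≤ (B2 ^ 2 / m) ^ p + B4 ^ p :=
    add_nonneg (pow_nonneg (div_nonneg (sq_nonneg _) hm0.le) _) (pow_nonneg hB4nn _)
  -- per fiber bound
  have hperg : ∀ g : Fin p × Fin 4 → Fin p × Fin 4,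
      (∑ F ∈ Ev.filter (fun F => canon F = g),
        (∏ i : Fin n, v i ^ ((univ.filter fun a => F a = i)).card) *
        (1/(m:ℝ)) ^ ((((univ.image F).filter fun i =>
          ((univ.filter fun a => F a = i)).card = 2).card + 1) / 2))
      ≤ (B2 ^ 2 / m) ^ p + B4 ^ p := by
    intro g
    rcases Finset.eq_empty_or_nonempty (Ev.filter (fun F => canon F = g)) with hemp | ⟨F₀, hF₀⟩
    · rw [hemp, Finset.sum_empty]
      exact habnn
    have hF₀g : canon F₀ = g := (Finset.mem_filter.mp hF₀).2
    have hF₀Ev : ∀ i, Even ((univ.filter fun a => F₀ a = i)).card :=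
      (Finset.mem_filter.mp (Finset.mem_filter.mp hF₀).1).2
    have hgg : ∀ a, g (g a) = g a := by
      intro a; rw [← hF₀g]; exact canon_idem F₀ a
    have hgs : ∀ s ∈ univ.image g, g s = s := by
      intro s hs
      obtain ⟨b, -, rfl⟩ := Finset.mem_image.mp hs
      exact hgg b
    set e : Fin p × Fin 4 → ℕ := fun s => ((univ.filter fun a => g a = s)).card with he
    have hfib : ∀ F ∈ Ev.filter (fun F => canon F = g), ∀ a a', F a = F a' ↔ g a = g a' := by
      intro F hF a a'
      rw [← (Finset.mem_filter.mp hF).2]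
      exact (canon_eq_iff F a a').symm
    have hFg : ∀ F ∈ Ev.filter (fun F => canon F = g), ∀ a, F (g a) = F a := by
      intro F hF a
      rw [← (Finset.mem_filter.mp hF).2]
      exact canon_spec F a
    have hmultg : ∀ F ∈ Ev.filter (fun F => canon F = g), ∀ s ∈ univ.image g,
        ((univ.filter fun a => F a = F s)).card = e s := by
      intro F hF s hs
      rw [he]
      congr 1
      ext a
      simp only [Finset.mem_filter, Finset.mem_univ, true_and]
      rw [hfib F hF a s, hgs s hs]
    have himg : ∀ F ∈ Ev.filter (fun F => canon F = g),
        univ.image F = (univ.image g).image F := by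
      intro F hF
      ext i
      constructor
      · intro hi
        obtain ⟨a, -, rfl⟩ := Finset.mem_image.mp hi
        exact Finset.mem_image.mpr ⟨g a, Finset.mem_image.mpr ⟨a, Finset.mem_univ _, rfl⟩,
          hFg F hF a⟩
      · intro hi
        obtain ⟨s, -, rfl⟩ := Finset.mem_image.mp hi
        exact Finset.mem_image.mpr ⟨s, Finset.mem_univ _, rfl⟩
    have hinjOn : ∀ F ∈ Ev.filter (fun F => canon F = g), ∀ s ∈ univ.image g,
        ∀ s' ∈ univ.image g, F s = F s' → s = s' := by
      intro F hF s hs s' hs' hFs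
      have h1 := (hfib F hF s s').mp hFs
      rw [hgs s hs, hgs s' hs'] at h1
      exact h1
    have hevg : ∀ s ∈ univ.image g, Even (e s) := by
      intro s hs
      rw [← hmultg F₀ hF₀ s hs]
      exact hF₀Ev (F₀ s)
    have hposg : ∀ s ∈ univ.image g, 1 ≤ e s := by
      intro s hs
      rw [he]
      apply Finset.card_pos.mpr
      exact ⟨s, Finset.mem_filter.mpr ⟨Finset.mem_univ _, hgs s hs⟩⟩
    have hsumg : ∑ s ∈ univ.image g, e s = 4 * p := by
      simp only [he]
      have hcf := Finset.card_eq_sum_card_fiberwise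
        (f := g) (s := (univ : Finset (Fin p × Fin 4))) (t := univ.image g)
        (fun a _ => Finset.mem_image.mpr ⟨a, Finset.mem_univ _, rfl⟩)
      rw [Finset.card_univ, Fintype.card_prod, Fintype.card_fin, Fintype.card_fin] at hcf
      omega
    have hW2 : ∀ F ∈ Ev.filter (fun F => canon F = g),
        (∏ i : Fin n, v i ^ ((univ.filter fun a => F a = i)).card) =
        ∏ s ∈ univ.image g, v (F s) ^ e s := by
      intro F hF
      have hone : ∀ i ∈ (univ : Finset (Fin n)), i ∉ univ.image F →
          v i ^ ((univ.filter fun a => F a = i)).card = 1 := by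
        intro i _ hni
        have hzero : ((univ.filter fun a => F a = i)).card = 0 := by
          rw [Finset.card_eq_zero, Finset.filter_eq_empty_iff]
          intro a _ hFa
          exact hni (Finset.mem_image.mpr ⟨a, Finset.mem_univ _, hFa⟩)
        rw [hzero, pow_zero]
      have hsub := Finset.prod_subset (Finset.subset_univ (univ.image F)) hone
      rw [← hsub, himg F hF, Finset.prod_image (fun s hs s' hs' h => hinjOn F hF s hs s' hs' h)]
      apply Finset.prod_congr rfl
      intro s hs
      rw [hmultg F hF s hs]
    have htF : ∀ F ∈ Ev.filter (fun F => canon F = g),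
        (((univ.image F).filter fun i =>
          ((univ.filter fun a => F a = i)).card = 2).card + 1) / 2 =
        ((((univ.image g).filter fun s => e s = 2).card + 1) / 2) := by
      intro F hF
      congr 2
      rw [himg F hF, Finset.filter_image]
      rw [Finset.card_image_of_injOn (fun s hs s' hs' h =>
        hinjOn F hF s (Finset.mem_of_mem_filter s hs) s'
          (Finset.mem_of_mem_filter s' hs') h)]
      apply Finset.card_bij (fun s _ => s)
      · intro s hs
        rw [Finset.mem_filter] at hs ⊢
        exact ⟨hs.1, by rw [← hmultg F hF s hs.1]; exact hs.2⟩
      · intro s hs s' hs' h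
        exact h
      · intro s hs
        rw [Finset.mem_filter] at hs
        refine ⟨s, ?_, rfl⟩
        rw [Finset.mem_filter]
        exact ⟨hs.1, by rw [hmultg F hF s hs.1]; exact hs.2⟩
    calc (∑ F ∈ Ev.filter (fun F => canon F = g),
          (∏ i : Fin n, v i ^ ((univ.filter fun a => F a = i)).card) *
          (1/(m:ℝ)) ^ ((((univ.image F).filter fun i =>
            ((univ.filter fun a => F a = i)).card = 2).card + 1) / 2))
        = (1/(m:ℝ)) ^ ((((univ.image g).filter fun s => e s = 2).card + 1) / 2) *
          ∑ F ∈ Ev.filter (fun F => canon F = g), ∏ s ∈ univ.image g, v (F s) ^ e s := by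
          rw [Finset.mul_sum]
          apply Finset.sum_congr rfl
          intro F hF
          rw [hW2 F hF, htF F hF, mul_comm]
      _ ≤ (1/(m:ℝ)) ^ ((((univ.image g).filter fun s => e s = 2).card + 1) / 2) *
          ∏ s ∈ univ.image g, (∑ i, v i ^ e s) := by
          apply mul_le_mul_of_nonneg_left ?_ (by positivity)
          have hevg' : ∀ s ∈ univ.image g, Even ((univ.filter fun a => g a = s)).card := by
            intro s hs
            have := hevg s hs
            rwa [he] at this
          exact fiber_sum v g _ (fun F hF => hFg F hF) hevg'
      _ ≤ (B2 ^ 2 / m) ^ p + B4 ^ p := by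
          have := stepE_g (p := p) hm v (univ.image g) e hevg hposg hsumg
          rw [hB2, hB4]
          exact this
  calc (∑ g : Fin p × Fin 4 → Fin p × Fin 4, ∑ F ∈ Ev.filter (fun F => canon F = g),
        (∏ i : Fin n, v i ^ ((univ.filter fun a => F a = i)).card) *
        (1/(m:ℝ)) ^ ((((univ.image F).filter fun i =>
          ((univ.filter fun a => F a = i)).card = 2).card + 1) / 2))
      ≤ ∑ _g : Fin p × Fin 4 → Fin p × Fin 4, ((B2 ^ 2 / m) ^ p + B4 ^ p) :=
        Finset.sum_le_sum (fun g _ => hperg g)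
    _ = ((p * 4) ^ (p * 4) : ℕ) * ((B2 ^ 2 / m) ^ p + B4 ^ p) := by
        rw [Finset.sum_const, Finset.card_univ, Fintype.card_fun, Fintype.card_prod,
          Fintype.card_fin, Fintype.card_fin, nsmul_eq_mul]
    _ = (4 * (p:ℝ)) ^ (4 * p) * (B2 ^ 2 / ↑m) ^ p + (4 * (p:ℝ)) ^ (4 * p) * B4 ^ p := by
        have hc : (((p * 4) ^ (p * 4) : ℕ) : ℝ) = (4 * (p:ℝ)) ^ (4 * p) := by
          push_cast
          rw [mul_comm (p:ℝ) 4, mul_comm p 4]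
        rw [hc, mul_add]
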